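/- Let C be a braided Z_q-extension of a pointed fusion category (q prime) that is not pointed. Then every simple object of C has Frobenius-Perron dimension 1 or α, where α is the smallest FP dimension greater than 1 of a simple object, and the adjoint subcategory C_ad is pointed of FP dimension α². -/

import Mathlib

/-!
A Grothendieck-ring (fusion ring) level formalization of fusion categories.
`Fin n` indexes the isomorphism classes of simple objects, `N i j k` is the
multiplicity of the simple `k` in the tensor product `i ⊗ j`, `dim` records the
Frobenius–Perron dimensions of the simple objects.
-/

/-- The Grothendieck-ring data of a fusion category. -/
structure FusionData where
  n : ℕ
  npos : 0 < n
  one : Fin n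
  dual : Fin n → Fin n
  N : Fin n → Fin n → Fin n → ℕ
  dim : Fin n → ℝ
  dim_ge_one : ∀ i, 1 ≤ dim i
  dim_one : dim one = 1
  dim_dual : ∀ i, dim (dual i) = dim i
  dim_mul : ∀ i j, dim i * dim j = ∑ k, (N i j k : ℝ) * dim k
  N_one_left : ∀ i k, N one i k = if k = i then 1 else 0
  N_one_right : ∀ i k, N i one k = if k = i then 1 else 0
  N_dual : ∀ i j, N i j one = if j = dual i then 1 else 0
  dual_dual : ∀ i, dual (dual i) = i
  N_assoc : ∀ i j k l, ∑ m, N i j m * N m k l = ∑ m, N j k m * N i m l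

namespace FusionData

/-- The index type of (iso classes of) simple objects. -/
abbrev I (C : FusionData) : Type := Fin C.n

/-- A simple object is invertible iff its FP dimension is `1`. -/
def Invertible (C : FusionData) (i : C.I) : Prop := C.dim i = 1

/-- A fusion category is pointed if all its simple objects are invertible. -/
def Pointed (C : FusionData) : Prop := ∀ i : C.I, C.dim i = 1

/-- The Frobenius–Perron dimension of the category. -/
noncomputable def FPdim (C : FusionData) : ℝ := ∑ i : C.I, C.dim i ^ 2

open Classical in
/-- The FP dimension of the full subcategory spanned by a set of simples. -/
noncomputable def FPdimSet (C : FusionData) (S : Set C.I) : ℝ :=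
  ∑ i : C.I, if i ∈ S then C.dim i ^ 2 else 0

open Classical in
/-- The number of iso classes of invertible objects, i.e. the order of `G(C)`. -/
noncomputable def numInv (C : FusionData) : ℕ :=
  (Finset.univ.filter fun i : C.I => C.dim i = 1).card

/-- A fusion subcategory: a set of simples containing the unit and closed under
duals and under taking simple constituents of tensor products. -/
structure Sub (C : FusionData) where
  carrier : Set C.I
  one_mem : C.one ∈ carrier
  dual_mem : ∀ i ∈ carrier, C.dual i ∈ carrier
  mul_mem : ∀ i ∈ carrier, ∀ j ∈ carrier, ∀ k, 0 < C.N i j k → k ∈ carrier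

/-- The simples of the fusion subcategory generated by a set `S` of simples. -/
inductive gen (C : FusionData) (S : Set C.I) : C.I → Prop
  | base {i} : i ∈ S → gen C S i
  | one : gen C S C.one
  | dual {i} : gen C S i → gen C S (C.dual i)
  | mul {i j k} : gen C S i → gen C S j → 0 < C.N i j k → gen C S k

/-- Simple constituents of the objects `X ⊗ X⋆`, `X` simple. -/
def adjointGenerators (C : FusionData) : Set C.I := {k | ∃ i, 0 < C.N i (C.dual i) k}

/-- The set of simple objects of the adjoint subcategory `C_ad`. -/
def adSet (C : FusionData) : Set C.I := {k | C.gen C.adjointGenerators k}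

/-- The set of simples of `C_pt`, the largest pointed fusion subcategory. -/
def ptSet (C : FusionData) : Set C.I := {i | C.dim i = 1}

/-- The ring-level shadow of a braiding: the Grothendieck ring of a braided
fusion category is commutative. -/
def Braided (C : FusionData) : Prop := ∀ i j k, C.N i j k = C.N j i k

/-- Integrality: every simple object has integer FP dimension. -/
def Integral (C : FusionData) : Prop := ∀ i : C.I, ∃ m : ℕ, C.dim i = (m : ℝ)

/-- Generalized Tambara–Yamagami: non-pointed, and the tensor product of any
two non-invertible simples is a direct sum of invertibles. -/
def GeneralizedTY (C : FusionData) : Prop :=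
  ¬ C.Pointed ∧ ∀ i j : C.I, C.dim i ≠ 1 → C.dim j ≠ 1 →
    ∀ k, 0 < C.N i j k → C.dim k = 1

/-- A grading of `C` by a group `G`. -/
structure Grading (C : FusionData) (G : Type*) [Group G] where
  deg : C.I → G
  deg_one : deg C.one = 1
  deg_mul : ∀ i j k, 0 < C.N i j k → deg k = deg i * deg j
  deg_dual : ∀ i, deg (C.dual i) = (deg i)⁻¹

/-- A grading is faithful if every component is nonzero, equivalently the
degree map is surjective. -/
def Grading.Faithful {C : FusionData} {G : Type*} [Group G] (g : C.Grading G) : Prop :=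
  Function.Surjective g.deg

/-- A `ℤ_q`-extension of a pointed fusion category: a faithful `ℤ_q`-grading
whose trivial component is pointed. -/
structure ZqExtension (C : FusionData) (q : ℕ) where
  grading : C.Grading (Multiplicative (ZMod q))
  faithful : Function.Surjective grading.deg
  trivial_pointed : ∀ i, grading.deg i = 1 → C.dim i = 1

/-- `C` is tensor equivalent to the Deligne product `B ⊠ E`. -/
def IsDeligneProd (C B E : FusionData) : Prop :=
  ∃ e : C.I ≃ B.I × E.I,
    e C.one = (B.one, E.one) ∧
    (∀ i, e (C.dual i) = (B.dual (e i).1, E.dual (e i).2)) ∧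
    (∀ i j k, C.N i j k = B.N (e i).1 (e j).1 (e k).1 * E.N (e i).2 (e j).2 (e k).2) ∧
    (∀ i, C.dim i = B.dim (e i).1 * E.dim (e i).2)

/-- `C` is tensor equivalent to the Deligne product of the finite family `F`. -/
def IsDelignePi (C : FusionData) {t : ℕ} (F : Fin t → FusionData) : Prop :=
  ∃ e : C.I ≃ ∀ s, (F s).I,
    (e C.one = fun s => (F s).one) ∧
    (∀ i s, e (C.dual i) s = (F s).dual (e i s)) ∧
    (∀ i j k, C.N i j k = ∏ s, (F s).N (e i s) (e j s) (e k s)) ∧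
    (∀ i, C.dim i = ∏ s, (F s).dim (e i s))

/-- A fusion category of type `(1, m; α, n)`: `m` invertible simples, `n`
simples of FP dimension `α > 1`, and no others. -/
def OfType₂ (C : FusionData) (α : ℝ) (m n : ℕ) : Prop :=
  1 < α ∧ (∀ i : C.I, C.dim i = 1 ∨ C.dim i = α) ∧
    Nat.card {i : C.I // C.dim i = 1} = m ∧ Nat.card {i : C.I // C.dim i = α} = n

/-- An Ising category: three simples `1, g, X` with `g` invertible, `g ≠ 1`,
`FPdim X = √2` and `X ⊗ X ≅ 1 ⊕ g`. -/
def IsIsing (C : FusionData) : Prop :=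
  C.n = 3 ∧ ¬ C.Pointed ∧ C.FPdim = 4 ∧
    ∃ g X : C.I, g ≠ C.one ∧ C.dim g = 1 ∧ C.dim X = Real.sqrt 2 ∧ C.dual X = X ∧
      C.N X X C.one = 1 ∧ C.N X X g = 1 ∧ ∀ k, 0 < C.N X X k → k = C.one ∨ k = g

/-- Modularity at the Grothendieck-ring level: braided together with a
symmetric nondegenerate S-matrix satisfying the Verlinde relations and
normalized by FP dimensions on the row of the unit. -/
def Modular (C : FusionData) : Prop :=
  C.Braided ∧
    ∃ s : Matrix C.I C.I ℂ,
      (∀ i j, s i j = s j i) ∧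
      (∀ i, s C.one i = (C.dim i : ℂ)) ∧
      (∀ i j k, s i j * s i k = (C.dim i : ℂ) * ∑ l, (C.N j k l : ℂ) * s i l) ∧
      IsUnit s

/-- A ring-level Morita context between two fusion categories: a based
`(C, D)`-bimodule with commuting indecomposable actions and equal global
FP dimensions. -/
structure MoritaContext (C D : FusionData) where
  m : ℕ
  actL : C.I → Fin m → Fin m → ℕ
  actR : D.I → Fin m → Fin m → ℕ
  actL_one : ∀ x y, actL C.one x y = if y = x then 1 else 0
  actR_one : ∀ x y, actR D.one x y = if y = x then 1 else 0
  actL_assoc : ∀ i j x z, (∑ k, C.N i j k * actL k x z) = ∑ y, actL j x y * actL i y z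
  actR_assoc : ∀ i j x z, (∑ k, D.N i j k * actR k x z) = ∑ y, actR i x y * actR j y z
  commute : ∀ i j x z, (∑ y, actL i x y * actR j y z) = ∑ y, actR j x y * actL i y z
  indecL : ∀ x y, ∃ i, 0 < actL i x y
  indecR : ∀ x y, ∃ j, 0 < actR j x y
  fpdim_eq : C.FPdim = D.FPdim

/-- (Categorical) Morita equivalence, encoded at the ring level. -/
def MoritaEquiv (C D : FusionData) : Prop := Nonempty (MoritaContext C D)

/-- Group-theoretical: Morita equivalent to a pointed fusion category. -/
def GroupTheoretical (C : FusionData) : Prop :=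
  ∃ D : FusionData, D.Pointed ∧ MoritaEquiv C D

end FusionData


namespace FusionData

open Finset

variable {C : FusionData}

lemma dim_pos (C : FusionData) (i : C.I) : 0 < C.dim i :=
  lt_of_lt_of_le one_pos (C.dim_ge_one i)

lemma dual_inj {i j : C.I} (h : C.dual i = C.dual j) : i = j := by
  have := congrArg C.dual h
  rwa [C.dual_dual, C.dual_dual] at this

lemma exists_pos_N (C : FusionData) (i j : C.I) : ∃ k, 0 < C.N i j k := by
  by_contra h
  push_neg at h
  have h0 : ∀ k, C.N i j k = 0 := fun k => Nat.le_zero.mp (h k)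
  have := C.dim_mul i j
  simp only [h0, Nat.cast_zero, zero_mul, Finset.sum_const_zero] at this
  exact absurd this (ne_of_gt (mul_pos (C.dim_pos i) (C.dim_pos j)))

/-- `act g X` : some simple constituent of `g ⊗ X`; for invertible `g` it is
the unique one. -/
noncomputable def act (C : FusionData) (g X : C.I) : C.I :=
  Classical.choose (C.exists_pos_N g X)

lemma act_pos (C : FusionData) (g X : C.I) : 0 < C.N g X (C.act g X) :=
  Classical.choose_spec (C.exists_pos_N g X)

/-- In a sum `∑ f k * dim k = 1` with `f one = 1`, all other terms vanish. -/
lemma terms_zero {f : C.I → ℕ} (hsum : ∑ k, (f k : ℝ) * C.dim k = 1)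
    (hone : f C.one = 1) : ∀ m, m ≠ C.one → f m = 0 := by
  intro m hm
  by_contra hne
  have h1 : (1 : ℝ) ≤ (f m : ℝ) * C.dim m := by
    have : (1 : ℝ) ≤ (f m : ℝ) := by exact_mod_cast Nat.one_le_iff_ne_zero.mpr hne
    calc (1:ℝ) = 1 * 1 := by ring
    _ ≤ (f m : ℝ) * C.dim m := by
        apply mul_le_mul this (C.dim_ge_one m) zero_le_one (le_trans zero_le_one this)
  have h2 : (1 : ℝ) ≤ (f C.one : ℝ) * C.dim C.one := by
    rw [hone, C.dim_one]; norm_num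
  have hsub : ({m, C.one} : Finset C.I) ⊆ Finset.univ := Finset.subset_univ _
  have hge : ∑ k ∈ ({m, C.one} : Finset C.I), (f k : ℝ) * C.dim k ≤
      ∑ k, (f k : ℝ) * C.dim k := by
    apply Finset.sum_le_sum_of_subset_of_nonneg hsub
    intro k _ _
    exact mul_nonneg (Nat.cast_nonneg _) (le_of_lt (C.dim_pos k))
  rw [Finset.sum_pair hm] at hge
  rw [hsum] at hge
  linarith

lemma N_invpair {h : C.I} (hh : C.dim h = 1) (m : C.I) :
    C.N (C.dual h) h m = if m = C.one then 1 else 0 := by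
  have hone : C.N (C.dual h) h C.one = 1 := by
    rw [C.N_dual]; simp [C.dual_dual]
  have hsum : ∑ k, (C.N (C.dual h) h k : ℝ) * C.dim k = 1 := by
    rw [← C.dim_mul, C.dim_dual, hh, mul_one]
  by_cases hm : m = C.one
  · simp [hm, hone]
  · simp [hm, terms_zero hsum hone m hm]

/-- The key cancellation identity for invertible `h`. -/
lemma star_id {h : C.I} (hh : C.dim h = 1) (X l : C.I) :
    ∑ m, C.N h X m * C.N (C.dual h) m l = if l = X then 1 else 0 := by
  have ha := C.N_assoc (C.dual h) h X l
  rw [← ha]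
  rw [Finset.sum_congr rfl (fun m _ => by rw [N_invpair hh m])]
  simp [C.N_one_left]

end FusionData

namespace FusionData

open Finset

variable {C : FusionData}

lemma pair_le_sum {f : C.I → ℕ} {a b : C.I} (hab : a ≠ b) :
    f a + f b ≤ ∑ k, f k := by
  have : ∑ k ∈ ({a, b} : Finset C.I), f k ≤ ∑ k, f k :=
    Finset.sum_le_sum_of_subset (Finset.subset_univ _)
  rwa [Finset.sum_pair hab] at this

/-- For invertible `h`, `h ⊗ X` is the simple `act h X` with multiplicity 1. -/
lemma act_eq {h : C.I} (hh : C.dim h = 1) (X m : C.I) :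
    C.N h X m = if m = C.act h X then 1 else 0 := by
  set k₀ := C.act h X with hk₀
  have hpos : 0 < C.N h X k₀ := C.act_pos h X
  -- any constituent m of h ⊗ X with `N (dual h) m l > 0` forces l = X
  have key : ∀ m, 0 < C.N h X m → 0 < C.N (C.dual h) m X := by
    intro m hm
    obtain ⟨l, hl⟩ := C.exists_pos_N (C.dual h) m
    have hlX : l = X := by
      by_contra hne
      have := star_id hh X l
      rw [if_neg hne] at this
      have hz := (Finset.sum_eq_zero_iff.mp this) m (Finset.mem_univ m)
      rcases Nat.mul_eq_zero.mp hz with h1 | h2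
      · omega
      · omega
    rwa [hlX] at hl
  have hsum1 : ∑ m, C.N h X m * C.N (C.dual h) m X = 1 := by
    have := star_id hh X X; simpa using this
  -- uniqueness
  have huniq : ∀ m, m ≠ k₀ → C.N h X m = 0 := by
    intro m hm
    by_contra hne
    have hm1 : 0 < C.N h X m := Nat.pos_of_ne_zero hne
    have t1 : 0 < C.N h X k₀ * C.N (C.dual h) k₀ X :=
      Nat.mul_pos hpos (key k₀ hpos)
    have t2 : 0 < C.N h X m * C.N (C.dual h) m X :=
      Nat.mul_pos hm1 (key m hm1)
    have hp := pair_le_sum (f := fun m => C.N h X m * C.N (C.dual h) m X) hm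
    rw [hsum1] at hp
    omega
  have hval : C.N h X k₀ = 1 := by
    have : ∑ m, C.N h X m * C.N (C.dual h) m X
        = C.N h X k₀ * C.N (C.dual h) k₀ X := by
      apply Finset.sum_eq_single
      · intro m _ hm; rw [huniq m hm, zero_mul]
      · intro hm; exact absurd (Finset.mem_univ k₀) hm
    rw [this] at hsum1
    exact Nat.eq_one_of_mul_eq_one_right hsum1
  by_cases hm : m = k₀
  · simp [hm, hval]
  · simp [hm, huniq m hm]

lemma act_eq_of_pos {h : C.I} (hh : C.dim h = 1) {X m : C.I}
    (hm : 0 < C.N h X m) : m = C.act h X := by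
  have := act_eq hh X m
  by_contra hne
  rw [if_neg hne] at this
  omega

lemma N_act {h : C.I} (hh : C.dim h = 1) (X : C.I) :
    C.N h X (C.act h X) = 1 := by
  rw [act_eq hh, if_pos rfl]

lemma dim_act {h : C.I} (hh : C.dim h = 1) (X : C.I) :
    C.dim (C.act h X) = C.dim X := by
  have := C.dim_mul h X
  rw [hh, one_mul] at this
  rw [this, Finset.sum_congr rfl (fun m _ => by rw [act_eq hh X m])]
  simp

lemma act_act_dual {h : C.I} (hh : C.dim h = 1) (X : C.I) :
    C.act (C.dual h) (C.act h X) = X := by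
  have hd : C.dim (C.dual h) = 1 := by rw [C.dim_dual]; exact hh
  -- N (dual h) (act h X) X > 0
  have key : 0 < C.N (C.dual h) (C.act h X) X := by
    obtain ⟨l, hl⟩ := C.exists_pos_N (C.dual h) (C.act h X)
    have hlX : l = X := by
      by_contra hne
      have := star_id hh X l
      rw [if_neg hne] at this
      have hz := (Finset.sum_eq_zero_iff.mp this) (C.act h X) (Finset.mem_univ _)
      have := C.act_pos h X
      rcases Nat.mul_eq_zero.mp hz with h1 | h2 <;> omega
    rwa [hlX] at hl
  exact (act_eq_of_pos hd key).symm

lemma act_dual_act {h : C.I} (hh : C.dim h = 1) (X : C.I) :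
    C.act h (C.act (C.dual h) X) = X := by
  have hd : C.dim (C.dual h) = 1 := by rw [C.dim_dual]; exact hh
  have := act_act_dual hd X
  rwa [C.dual_dual] at this

lemma act_cancel {g : C.I} (hg : C.dim g = 1) {X Y : C.I}
    (h : C.act g X = C.act g Y) : X = Y := by
  have hx := act_act_dual hg X
  have hy := act_act_dual hg Y
  rw [← hx, ← hy, h]

lemma act_assoc {g h : C.I} (hg : C.dim g = 1) (hh : C.dim h = 1) (X : C.I) :
    C.act (C.act g h) X = C.act g (C.act h X) := by
  have hgh : C.dim (C.act g h) = 1 := by rw [dim_act hg]; exact hh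
  have ha := C.N_assoc g h X (C.act g (C.act h X))
  -- LHS collapses
  have hL : ∑ m, C.N g h m * C.N m X (C.act g (C.act h X))
      = C.N (C.act g h) X (C.act g (C.act h X)) := by
    rw [Finset.sum_congr rfl (fun m _ => by rw [act_eq hg h m])]
    simp
  have hR : ∑ m, C.N h X m * C.N g m (C.act g (C.act h X))
      = C.N g (C.act h X) (C.act g (C.act h X)) := by
    rw [Finset.sum_congr rfl (fun m _ => by rw [act_eq hh X m])]
    simp
  rw [hL, hR] at ha
  have : 0 < C.N (C.act g h) X (C.act g (C.act h X)) := by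
    rw [ha, N_act hg]
    exact Nat.one_pos
  exact ((act_eq_of_pos hgh this)).symm

lemma act_comm_inv (hbr : C.Braided) {g h : C.I} (hh : C.dim h = 1) :
    C.act g h = C.act h g := by
  have : 0 < C.N h g (C.act g h) := by
    rw [← hbr g h]; exact C.act_pos g h
  exact act_eq_of_pos hh this

lemma act_one (X : C.I) : C.act C.one X = X := by
  have := C.act_pos C.one X
  rw [C.N_one_left] at this
  by_contra hne
  rw [if_neg hne] at this
  omega

end FusionData

namespace FusionData

open Finset

variable {C : FusionData}

/-- Frobenius reciprocity with an invertible-indexed output: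
`N X Y⋆ g = N g⋆ X Y`. -/
lemma FR1 (X Y g : C.I) : C.N X (C.dual Y) g = C.N (C.dual g) X Y := by
  have ha := C.N_assoc (C.dual g) X (C.dual Y) C.one
  have hL : ∑ m, C.N (C.dual g) X m * C.N m (C.dual Y) C.one
      = C.N (C.dual g) X Y := by
    have hterm : ∀ m, C.N (C.dual g) X m * C.N m (C.dual Y) C.one
        = if m = Y then C.N (C.dual g) X m else 0 := by
      intro m
      rw [C.N_dual m (C.dual Y)]
      rcases eq_or_ne m Y with hm | hm
      · rw [if_pos hm, if_pos (by rw [hm]), mul_one]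
      · rw [if_neg hm, if_neg (fun hc => hm (dual_inj hc).symm), mul_zero]
    rw [Finset.sum_congr rfl (fun m _ => hterm m)]
    simp
  have hR : ∑ m, C.N X (C.dual Y) m * C.N (C.dual g) m C.one
      = C.N X (C.dual Y) g := by
    have hterm : ∀ m, C.N X (C.dual Y) m * C.N (C.dual g) m C.one
        = if m = g then C.N X (C.dual Y) m else 0 := by
      intro m
      rw [C.N_dual (C.dual g) m]
      rcases eq_or_ne m g with hm | hm
      · rw [if_pos hm, if_pos (by rw [hm, C.dual_dual]), mul_one]
      · rw [if_neg hm, if_neg (fun hc => hm (by rw [hc, C.dual_dual])), mul_zero]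
    rw [Finset.sum_congr rfl (fun m _ => hterm m)]
    simp
  rw [hL, hR] at ha
  exact ha.symm

lemma FR2 (X Y g : C.I) : C.N X Y g = C.N (C.dual g) X (C.dual Y) := by
  have := FR1 X (C.dual Y) g
  rwa [C.dual_dual] at this

/-- The set of invertible constituents of `X ⊗ X⋆` (the "stabilizer"). -/
def Sset (C : FusionData) (X : C.I) : Finset C.I :=
  Finset.univ.filter (fun g => 0 < C.N X (C.dual X) g)

lemma mem_Sset {X g : C.I} : g ∈ C.Sset X ↔ 0 < C.N X (C.dual X) g := by
  simp [Sset]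

lemma one_mem_Sset (X : C.I) : C.one ∈ C.Sset X := by
  rw [mem_Sset, C.N_dual]
  simp

lemma mem_Sset_of (X : C.I) {g : C.I} (hd : C.dim g = 1) (ha : C.act g X = X) :
    g ∈ C.Sset X := by
  have hd' : C.dim (C.dual g) = 1 := by rw [C.dim_dual]; exact hd
  have hgX : C.act (C.dual g) X = X := by
    conv_lhs => rw [← ha]
    exact act_act_dual hd X
  have h3 := N_act hd' X
  rw [hgX] at h3
  rw [mem_Sset, FR1, h3]
  exact Nat.one_pos

section Graded

variable {G : Type*} [Group G] (gr : C.Grading G)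

lemma deg_act (g X : C.I) : gr.deg (C.act g X) = gr.deg g * gr.deg X :=
  gr.deg_mul g X (C.act g X) (C.act_pos g X)

variable (hpt : ∀ i, gr.deg i = 1 → C.dim i = 1)

include gr hpt

lemma deg_dim_one {X g : C.I} (hg : 0 < C.N X (C.dual X) g) : C.dim g = 1 := by
  apply hpt
  rw [gr.deg_mul X (C.dual X) g hg, gr.deg_dual, mul_inv_cancel]

lemma Sset_dim_one {X g : C.I} (hg : g ∈ C.Sset X) : C.dim g = 1 :=
  deg_dim_one gr hpt (mem_Sset.mp hg)

lemma Sset_act {X g : C.I} (hg : g ∈ C.Sset X) : C.act g X = X := by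
  have hd : C.dim g = 1 := Sset_dim_one gr hpt hg
  have hd' : C.dim (C.dual g) = 1 := by rw [C.dim_dual]; exact hd
  have h1 : 0 < C.N (C.dual g) X X := by rw [← FR1]; exact mem_Sset.mp hg
  have h2 : X = C.act (C.dual g) X := act_eq_of_pos hd' h1
  conv_lhs => rw [h2]
  exact act_dual_act hd X

lemma Sset_indicator (X g : C.I) :
    C.N X (C.dual X) g = if g ∈ C.Sset X then 1 else 0 := by
  by_cases hg : g ∈ C.Sset X
  · rw [if_pos hg]
    have hd : C.dim g = 1 := Sset_dim_one gr hpt hg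
    have hd' : C.dim (C.dual g) = 1 := by rw [C.dim_dual]; exact hd
    have hgX : C.act (C.dual g) X = X := by
      conv_lhs => rw [← Sset_act gr hpt hg]
      exact act_act_dual hd X
    have h3 := N_act hd' X
    rw [hgX] at h3
    rw [FR1, h3]
  · rw [if_neg hg]
    rw [mem_Sset] at hg
    omega

lemma Sset_card (X : C.I) : C.dim X ^ 2 = ((C.Sset X).card : ℝ) := by
  have hd := C.dim_mul X (C.dual X)
  rw [C.dim_dual, ← sq] at hd
  rw [hd]
  have hterm : ∀ g : C.I, ((C.N X (C.dual X) g : ℝ)) * C.dim g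
      = if g ∈ C.Sset X then 1 else 0 := by
    intro g
    rw [Sset_indicator gr hpt X g]
    by_cases hg : g ∈ C.Sset X
    · simp [hg, Sset_dim_one gr hpt hg]
    · simp [hg]
  rw [Finset.sum_congr rfl (fun g _ => hterm g)]
  rw [Finset.sum_boole]
  simp [Finset.filter_mem_eq_inter]

lemma Sset_dual_mem {X g : C.I} (hg : g ∈ C.Sset X) : C.dual g ∈ C.Sset X := by
  have hd : C.dim g = 1 := Sset_dim_one gr hpt hg
  apply mem_Sset_of X (by rw [C.dim_dual]; exact hd)
  conv_lhs => rw [← Sset_act gr hpt hg]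
  exact act_act_dual hd X

lemma Sset_mul_mem {X g h : C.I} (hg : g ∈ C.Sset X) (hh : h ∈ C.Sset X) :
    C.act g h ∈ C.Sset X := by
  have hdg : C.dim g = 1 := Sset_dim_one gr hpt hg
  have hdh : C.dim h = 1 := Sset_dim_one gr hpt hh
  apply mem_Sset_of X (by rw [dim_act hdg]; exact hdh)
  rw [act_assoc hdg hdh, Sset_act gr hpt hh, Sset_act gr hpt hg]

lemma Sset_orbit (hbr : C.Braided) {g : C.I} (hg : C.dim g = 1) (X : C.I) :
    C.Sset (C.act g X) = C.Sset X := by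
  ext h
  constructor
  · intro hh
    have hdh : C.dim h = 1 := Sset_dim_one gr hpt hh
    have hact := Sset_act gr hpt hh
    rw [← act_assoc hdh hg, act_comm_inv hbr hg, act_assoc hg hdh] at hact
    exact mem_Sset_of X hdh (act_cancel hg hact)
  · intro hh
    have hdh : C.dim h = 1 := Sset_dim_one gr hpt hh
    apply mem_Sset_of _ hdh
    rw [← act_assoc hdh hg, act_comm_inv hbr hg, act_assoc hg hdh,
      Sset_act gr hpt hh]

/-- Two simples of the same degree lie in the same orbit of invertibles. -/
lemma same_comp {X Y : C.I} (hdeg : gr.deg X = gr.deg Y) :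
    ∃ g, C.dim g = 1 ∧ C.act g X = Y := by
  obtain ⟨g, hg⟩ := C.exists_pos_N X (C.dual Y)
  have hdg : C.dim g = 1 := by
    apply hpt
    rw [gr.deg_mul X (C.dual Y) g hg, gr.deg_dual, hdeg, mul_inv_cancel]
  have hdg' : C.dim (C.dual g) = 1 := by rw [C.dim_dual]; exact hdg
  rw [FR1] at hg
  exact ⟨C.dual g, hdg', (act_eq_of_pos hdg' hg).symm⟩

end Graded

end FusionData

namespace FusionData

open Finset

variable {C : FusionData}

lemma sum_comm4 (F : C.I → C.I → C.I → C.I → ℕ) :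
    ∑ i, ∑ j, ∑ a, ∑ b, F i j a b = ∑ a, ∑ b, ∑ j, ∑ i, F i j a b := by
  calc ∑ i, ∑ j, ∑ a, ∑ b, F i j a b
      = ∑ i, ∑ a, ∑ j, ∑ b, F i j a b :=
        Finset.sum_congr rfl (fun i _ => Finset.sum_comm)
    _ = ∑ a, ∑ i, ∑ j, ∑ b, F i j a b := Finset.sum_comm
    _ = ∑ a, ∑ i, ∑ b, ∑ j, F i j a b :=
        Finset.sum_congr rfl (fun a _ =>
          Finset.sum_congr rfl (fun i _ => Finset.sum_comm))
    _ = ∑ a, ∑ b, ∑ i, ∑ j, F i j a b :=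
        Finset.sum_congr rfl (fun a _ => Finset.sum_comm)
    _ = ∑ a, ∑ b, ∑ j, ∑ i, F i j a b :=
        Finset.sum_congr rfl (fun a _ =>
          Finset.sum_congr rfl (fun b _ => Finset.sum_comm))

lemma sum_comm3 (F : C.I → C.I → C.I → ℕ) :
    ∑ i, ∑ b, ∑ j, F i b j = ∑ b, ∑ j, ∑ i, F i b j := by
  calc ∑ i, ∑ b, ∑ j, F i b j
      = ∑ b, ∑ i, ∑ j, F i b j := Finset.sum_comm
    _ = ∑ b, ∑ j, ∑ i, F i b j :=
        Finset.sum_congr rfl (fun b _ => Finset.sum_comm)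

/-- Convolution product on the Grothendieck semiring. -/
def fmul (C : FusionData) (u v : C.I → ℕ) : C.I → ℕ :=
  fun k => ∑ i, ∑ j, u i * v j * C.N i j k

/-- Basis delta function. -/
def fdelta (C : FusionData) (i : C.I) : C.I → ℕ :=
  fun k => if k = i then 1 else 0

lemma fmul_delta (i j : C.I) : C.fmul (C.fdelta i) (C.fdelta j)
    = fun k => C.N i j k := by
  funext k
  unfold fmul fdelta
  rw [Finset.sum_eq_single i]
  · rw [Finset.sum_eq_single j]
    · simp
    · intro b _ hb; simp [hb]
    · intro hb; exact absurd (Finset.mem_univ j) hb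
  · intro b _ hb
    apply Finset.sum_eq_zero
    intro c _
    simp [hb]
  · intro hb; exact absurd (Finset.mem_univ i) hb

lemma fmul_comm (hbr : C.Braided) (u v : C.I → ℕ) :
    C.fmul u v = C.fmul v u := by
  funext k
  unfold fmul
  rw [Finset.sum_comm]
  apply Finset.sum_congr rfl
  intro j _
  apply Finset.sum_congr rfl
  intro i _
  rw [hbr i j k]
  ring

lemma fmul_expand (u v w : C.I → ℕ) (k : C.I) :
    C.fmul (C.fmul u v) w k
      = ∑ a, ∑ b, ∑ j, u a * v b * w j * (∑ i, C.N a b i * C.N i j k) := by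
  unfold fmul
  calc ∑ i, ∑ j, (∑ a, ∑ b, u a * v b * C.N a b i) * w j * C.N i j k
      = ∑ i, ∑ j, ∑ a, ∑ b, u a * v b * C.N a b i * (w j * C.N i j k) := by
        apply Finset.sum_congr rfl; intro i _
        apply Finset.sum_congr rfl; intro j _
        rw [mul_assoc, Finset.sum_mul]
        apply Finset.sum_congr rfl; intro a _
        rw [Finset.sum_mul]
    _ = ∑ a, ∑ b, ∑ j, ∑ i, u a * v b * C.N a b i * (w j * C.N i j k) :=
        sum_comm4 _
    _ = ∑ a, ∑ b, ∑ j, u a * v b * w j * (∑ i, C.N a b i * C.N i j k) := by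
        apply Finset.sum_congr rfl; intro a _
        apply Finset.sum_congr rfl; intro b _
        apply Finset.sum_congr rfl; intro j _
        rw [Finset.mul_sum]
        apply Finset.sum_congr rfl; intro i _
        ring

lemma fmul_expand' (u v w : C.I → ℕ) (k : C.I) :
    C.fmul u (C.fmul v w) k
      = ∑ a, ∑ b, ∑ j, u a * v b * w j * (∑ i, C.N b j i * C.N a i k) := by
  unfold fmul
  calc ∑ a, ∑ i, u a * (∑ b, ∑ j, v b * w j * C.N b j i) * C.N a i k
      = ∑ a, ∑ i, ∑ b, ∑ j, u a * (v b * w j * C.N b j i) * C.N a i k := by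
        apply Finset.sum_congr rfl; intro a _
        apply Finset.sum_congr rfl; intro i _
        rw [Finset.mul_sum, Finset.sum_mul]
        apply Finset.sum_congr rfl; intro b _
        rw [Finset.mul_sum, Finset.sum_mul]
    _ = ∑ a, ∑ b, ∑ j, ∑ i, u a * (v b * w j * C.N b j i) * C.N a i k := by
        apply Finset.sum_congr rfl; intro a _
        exact sum_comm3 _
    _ = ∑ a, ∑ b, ∑ j, u a * v b * w j * (∑ i, C.N b j i * C.N a i k) := by
        apply Finset.sum_congr rfl; intro a _
        apply Finset.sum_congr rfl; intro b _
        apply Finset.sum_congr rfl; intro j _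
        rw [Finset.mul_sum]
        apply Finset.sum_congr rfl; intro i _
        ring

lemma fmul_assoc (u v w : C.I → ℕ) :
    C.fmul (C.fmul u v) w = C.fmul u (C.fmul v w) := by
  funext k
  rw [fmul_expand, fmul_expand']
  apply Finset.sum_congr rfl; intro a _
  apply Finset.sum_congr rfl; intro b _
  apply Finset.sum_congr rfl; intro j _
  rw [C.N_assoc a b j k]

lemma fmul_exchange (hbr : C.Braided) (a b c d : C.I → ℕ) :
    C.fmul (C.fmul a b) (C.fmul c d) = C.fmul (C.fmul a c) (C.fmul b d) := by
  calc C.fmul (C.fmul a b) (C.fmul c d)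
      = C.fmul a (C.fmul b (C.fmul c d)) := fmul_assoc a b (C.fmul c d)
    _ = C.fmul a (C.fmul (C.fmul b c) d) := by rw [fmul_assoc b c d]
    _ = C.fmul a (C.fmul (C.fmul c b) d) := by rw [fmul_comm hbr b c]
    _ = C.fmul a (C.fmul c (C.fmul b d)) := by rw [fmul_assoc c b d]
    _ = C.fmul (C.fmul a c) (C.fmul b d) := (fmul_assoc a c (C.fmul b d)).symm

lemma fmul_one_eval (u v : C.I → ℕ) :
    C.fmul u v C.one = ∑ i, u i * v (C.dual i) := by
  unfold fmul
  apply Finset.sum_congr rfl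
  intro i _
  rw [Finset.sum_eq_single (C.dual i)]
  · rw [C.N_dual, if_pos rfl, mul_one]
  · intro b _ hb
    rw [C.N_dual, if_neg hb, mul_zero]
  · intro hb; exact absurd (Finset.mem_univ _) hb

/-- The key braided identity `τ((XY)(X⋆Y⋆)) = τ((XX⋆)(YY⋆))`. -/
lemma E1 (hbr : C.Braided) (X Y : C.I) :
    ∑ m, C.N X Y m * C.N (C.dual X) (C.dual Y) (C.dual m)
      = ∑ g, C.N X (C.dual X) g * C.N Y (C.dual Y) (C.dual g) := by
  have h4 := fmul_exchange hbr (C.fdelta X) (C.fdelta Y)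
    (C.fdelta (C.dual X)) (C.fdelta (C.dual Y))
  have h5 := congrFun h4 C.one
  rw [fmul_delta, fmul_delta, fmul_delta, fmul_delta] at h5
  rw [fmul_one_eval, fmul_one_eval] at h5
  exact h5

/-- The four-fold product coefficient identity. -/
lemma E2 (hbr : C.Braided) (X Y g : C.I) :
    ∑ a, ∑ b, C.N X Y a * C.N (C.dual X) (C.dual Y) b * C.N a b g
      = ∑ a, ∑ b, C.N X (C.dual X) a * C.N Y (C.dual Y) b * C.N a b g := by
  have h4 := fmul_exchange hbr (C.fdelta X) (C.fdelta Y)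
    (C.fdelta (C.dual X)) (C.fdelta (C.dual Y))
  have h5 := congrFun h4 g
  rw [fmul_delta, fmul_delta, fmul_delta, fmul_delta] at h5
  unfold fmul at h5
  exact h5
end FusionData

namespace FusionData

open Finset

variable {C : FusionData}

lemma exists_pos_of_sum_pos {f : C.I → ℕ} (h : 0 < ∑ i, f i) : ∃ i, 0 < f i := by
  by_contra hc
  push_neg at hc
  have : ∀ i ∈ Finset.univ, f i = 0 := fun i _ => Nat.le_zero.mp (hc i)
  rw [Finset.sum_eq_zero this] at h
  omega

section Step

variable {G : Type*} [CommGroup G] (gr : C.Grading G)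
  (hpt : ∀ i, gr.deg i = 1 → C.dim i = 1)

include gr hpt in
/-- The key induction step: if `Y` has dimension `α` and the same stabilizer
as `X₀`, and `deg X₀ * deg Y ≠ 1`, then the (unique) constituent of `X₀ ⊗ Y`
again has dimension `α` and the same stabilizer. -/
lemma step (hbr : C.Braided)
    (hbad : ∀ u, C.dim u = 1 → gr.deg u = 1)
    {α : ℝ} (hα : IsLeast {x : ℝ | 1 < x ∧ ∃ i : C.I, C.dim i = x} α)
    {X₀ Y : C.I} (hX₀ : C.dim X₀ = α) (hY : C.dim Y = α)
    (hS : C.Sset Y = C.Sset X₀)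
    (hdeg : gr.deg X₀ * gr.deg Y ≠ 1) :
    ∃ Z, C.dim Z = α ∧ C.Sset Z = C.Sset X₀ ∧
      gr.deg Z = gr.deg X₀ * gr.deg Y := by
  have h1α : 1 < α := hα.1.1
  have hαpos : 0 < α := lt_trans one_pos h1α
  set ν : C.I → ℕ := fun m => C.N X₀ Y m with hν
  set μ : C.I → ℕ := fun m => C.N (C.dual X₀) (C.dual Y) (C.dual m) with hμ
  -- α² = |T|
  have cardT : α ^ 2 = ((C.Sset X₀).card : ℝ) := by
    rw [← hX₀]; exact Sset_card gr hpt X₀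
  -- the E1 count
  have hE : ∑ m, ν m * μ m = (C.Sset X₀).card := by
    rw [E1 hbr X₀ Y]
    have hterm : ∀ g, C.N X₀ (C.dual X₀) g * C.N Y (C.dual Y) (C.dual g)
        = if g ∈ C.Sset X₀ then 1 else 0 := by
      intro g
      by_cases hg : g ∈ C.Sset X₀
      · rw [if_pos hg]
        have hg2 : C.dual g ∈ C.Sset Y := by
          rw [hS]; exact Sset_dual_mem gr hpt hg
        rw [Sset_indicator gr hpt X₀ g, if_pos hg,
          Sset_indicator gr hpt Y (C.dual g), if_pos hg2]
      · rw [if_neg hg]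
        have hg2 : C.dual g ∉ C.Sset Y := by
          intro hc
          rw [hS] at hc
          have := Sset_dual_mem gr hpt hc
          rw [C.dual_dual] at this
          exact hg this
        rw [Sset_indicator gr hpt Y (C.dual g), if_neg hg2, mul_zero]
    rw [Finset.sum_congr rfl fun g _ => hterm g]
    rw [Finset.sum_ite_mem, Finset.univ_inter, Finset.sum_const, smul_eq_mul,
      mul_one]
  -- support dimension bounds
  have hν1 : ∀ m, ν m ≠ 0 → α ≤ C.dim m := by
    intro m hm
    have hpos : 0 < ν m := Nat.pos_of_ne_zero hm
    have hdm : gr.deg m = gr.deg X₀ * gr.deg Y := gr.deg_mul _ _ _ hpos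
    have hne : C.dim m ≠ 1 := by
      intro hc
      exact hdeg (by rw [← hdm]; exact hbad m hc)
    exact hα.2 ⟨lt_of_le_of_ne (C.dim_ge_one m) (Ne.symm hne), m, rfl⟩
  have hμ1 : ∀ m, μ m ≠ 0 → α ≤ C.dim m := by
    intro m hm
    have hpos : 0 < μ m := Nat.pos_of_ne_zero hm
    have hdm : gr.deg (C.dual m) = gr.deg (C.dual X₀) * gr.deg (C.dual Y) :=
      gr.deg_mul _ _ _ hpos
    rw [gr.deg_dual, gr.deg_dual, gr.deg_dual, ← mul_inv] at hdm
    have hne : C.dim m ≠ 1 := by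
      intro hc
      have hcd : C.dim (C.dual m) = 1 := by rw [C.dim_dual]; exact hc
      have h2 := hbad (C.dual m) hcd
      rw [gr.deg_dual] at h2
      rw [h2] at hdm
      exact hdeg (inv_eq_one.mp hdm.symm)
    exact hα.2 ⟨lt_of_le_of_ne (C.dim_ge_one m) (Ne.symm hne), m, rfl⟩
  -- weighted sums
  have Sν : ∑ m, (ν m : ℝ) * C.dim m = α ^ 2 := by
    have := C.dim_mul X₀ Y
    rw [hX₀, hY, ← sq] at this
    exact this.symm
  have Sμ : ∑ m, (μ m : ℝ) * C.dim m = α ^ 2 := by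
    have hdb : Function.Bijective C.dual :=
      Function.Involutive.bijective (fun i => C.dual_dual i)
    have hre : ∑ m, (μ m : ℝ) * C.dim m
        = ∑ j, (C.N (C.dual X₀) (C.dual Y) j : ℝ) * C.dim (C.dual j) := by
      apply Fintype.sum_bijective C.dual hdb
      intro m
      rw [hμ]
      simp only
      rw [C.dual_dual]
    rw [hre]
    rw [Finset.sum_congr rfl fun j _ => by rw [C.dim_dual]]
    have := C.dim_mul (C.dual X₀) (C.dual Y)
    rw [C.dim_dual, C.dim_dual, hX₀, hY, ← sq] at this
    exact this.symm
  set A : ℕ := ∑ m, ν m with hA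
  set B : ℕ := ∑ m, μ m with hB
  have hcastA : ((A : ℝ)) = ∑ m, (ν m : ℝ) := by rw [hA]; push_cast; rfl
  have hcastB : ((B : ℝ)) = ∑ m, (μ m : ℝ) := by rw [hB]; push_cast; rfl
  have hAle : (A : ℝ) ≤ α := by
    have h1 : (A : ℝ) * α ≤ α ^ 2 := by
      rw [← Sν, hcastA, Finset.sum_mul]
      apply Finset.sum_le_sum
      intro m _
      rcases eq_or_ne (ν m) 0 with hm | hm
      · simp [hm]
      · exact mul_le_mul_of_nonneg_left (hν1 m hm) (Nat.cast_nonneg _)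
    nlinarith
  have hBle : (B : ℝ) ≤ α := by
    have h1 : (B : ℝ) * α ≤ α ^ 2 := by
      rw [← Sμ, hcastB, Finset.sum_mul]
      apply Finset.sum_le_sum
      intro m _
      rcases eq_or_ne (μ m) 0 with hm | hm
      · simp [hm]
      · exact mul_le_mul_of_nonneg_left (hμ1 m hm) (Nat.cast_nonneg _)
    nlinarith
  have hprod_le : ∑ m, ν m * μ m ≤ A * B := by
    calc ∑ m, ν m * μ m ≤ ∑ m, ν m * B := by
          apply Finset.sum_le_sum
          intro m _
          exact Nat.mul_le_mul_left _
            (Finset.single_le_sum (fun i _ => Nat.zero_le _) (Finset.mem_univ m))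
      _ = A * B := by rw [← Finset.sum_mul]
  -- equality chain
  have hABreal : (A : ℝ) * B = α ^ 2 ∧ (∑ m, ν m * μ m) = A * B := by
    have h1 : α ^ 2 ≤ ((A * B : ℕ) : ℝ) := by
      rw [cardT, ← hE]
      exact_mod_cast hprod_le
    have h2 : ((A * B : ℕ) : ℝ) ≤ α ^ 2 := by
      push_cast
      calc (A : ℝ) * B ≤ α * α :=
            mul_le_mul hAle hBle (Nat.cast_nonneg _) (le_of_lt hαpos)
        _ = α ^ 2 := (sq α).symm
    have h3 : ((A * B : ℕ) : ℝ) = α ^ 2 := le_antisymm h2 h1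
    constructor
    · push_cast at h3; exact h3
    · have h4 : ((∑ m, ν m * μ m : ℕ) : ℝ) = ((A * B : ℕ) : ℝ) := by
        calc ((∑ m, ν m * μ m : ℕ) : ℝ) = (((C.Sset X₀).card : ℕ) : ℝ) := by
              exact_mod_cast hE
          _ = α ^ 2 := cardT.symm
          _ = ((A * B : ℕ) : ℝ) := h3.symm
      exact_mod_cast h4
  have hAα : (A : ℝ) = α := by
    by_contra hne
    have hAlt : (A : ℝ) < α := lt_of_le_of_ne hAle hne
    have hAnn : (0:ℝ) ≤ (A : ℝ) := Nat.cast_nonneg _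
    have hBnn : (0:ℝ) ≤ (B : ℝ) := Nat.cast_nonneg _
    nlinarith [hABreal.1]
  have hBα : (B : ℝ) = α := by
    have h1 := hABreal.1
    rw [hAα] at h1
    exact mul_left_cancel₀ (ne_of_gt hαpos) (h1.trans (sq α))
  have hApos : 0 < A := by
    have : (0:ℝ) < A := by rw [hAα]; exact hαpos
    exact_mod_cast this
  have hBpos : 0 < B := by
    have : (0:ℝ) < B := by rw [hBα]; exact hαpos
    exact_mod_cast this
  -- pointwise equality
  have hpt1 : ∀ m, ν m * μ m = ν m * B := by
    have hle : ∀ m ∈ Finset.univ, ν m * μ m ≤ ν m * B := fun m _ =>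
      Nat.mul_le_mul_left _
        (Finset.single_le_sum (fun i _ => Nat.zero_le _) (Finset.mem_univ m))
    have hsum : ∑ m, ν m * μ m = ∑ m, ν m * B := by
      rw [hABreal.2, ← Finset.sum_mul]
    intro m
    exact (Finset.sum_eq_sum_iff_of_le hle).mp hsum m (Finset.mem_univ m)
  have hpt2 : ∀ m, ν m * μ m = A * μ m := by
    have hle : ∀ m ∈ Finset.univ, ν m * μ m ≤ A * μ m := fun m _ =>
      Nat.mul_le_mul_right _
        (Finset.single_le_sum (fun i _ => Nat.zero_le _) (Finset.mem_univ m))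
    have hsum : ∑ m, ν m * μ m = ∑ m, A * μ m := by
      rw [hABreal.2, ← Finset.mul_sum]
    intro m
    exact (Finset.sum_eq_sum_iff_of_le hle).mp hsum m (Finset.mem_univ m)
  obtain ⟨m₀, hm₀⟩ : ∃ m₀, 0 < ν m₀ := exists_pos_of_sum_pos (hA ▸ hApos)
  have hμm₀ : μ m₀ = B := Nat.eq_of_mul_eq_mul_left hm₀ (hpt1 m₀)
  have hνm₀ : ν m₀ = A := by
    have := hpt2 m₀
    rw [hμm₀] at this
    exact Nat.eq_of_mul_eq_mul_right hBpos this
  have huniqν : ∀ m, m ≠ m₀ → ν m = 0 := by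
    intro m hm
    by_contra hc
    have hμm : μ m = B := Nat.eq_of_mul_eq_mul_left (Nat.pos_of_ne_zero hc) (hpt1 m)
    have := pair_le_sum (f := μ) hm
    rw [← hB, hμm, hμm₀] at this
    omega
  have huniqμ : ∀ m, m ≠ m₀ → μ m = 0 := by
    intro m hm
    by_contra hc
    have hνm : ν m = A :=
      Nat.eq_of_mul_eq_mul_right (Nat.pos_of_ne_zero hc) (hpt2 m)
    have := huniqν m hm
    omega
  -- dimension of m₀
  have hdim₀ : C.dim m₀ = α := by
    have hcol : ∑ m, (ν m : ℝ) * C.dim m = (ν m₀ : ℝ) * C.dim m₀ := by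
      apply Finset.sum_eq_single
      · intro m _ hm
        rw [huniqν m hm]
        simp
      · intro hm; exact absurd (Finset.mem_univ m₀) hm
    rw [hcol, hνm₀, hAα] at Sν
    rw [sq] at Sν
    exact mul_left_cancel₀ (ne_of_gt hαpos) Sν
  have hdeg₀ : gr.deg m₀ = gr.deg X₀ * gr.deg Y := gr.deg_mul _ _ _ hm₀
  -- stabilizer of m₀
  have hfν : ∀ m, C.N X₀ Y m = if m = m₀ then A else 0 := by
    intro m
    rcases eq_or_ne m m₀ with hm | hm
    · rw [hm, if_pos rfl]; exact hνm₀
    · rw [if_neg hm]; exact huniqν m hm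
  have hfμ : ∀ j, C.N (C.dual X₀) (C.dual Y) j = if j = C.dual m₀ then B else 0 := by
    intro j
    have h1 : C.N (C.dual X₀) (C.dual Y) j = μ (C.dual j) := by
      rw [hμ]; simp only; rw [C.dual_dual]
    rcases eq_or_ne j (C.dual m₀) with hj | hj
    · rw [if_pos hj, h1, hj, C.dual_dual, hμm₀]
    · rw [if_neg hj, h1]
      apply huniqμ
      intro hc
      exact hj (by rw [← hc, C.dual_dual])
  have hcoef : ∀ g, A * B * C.N m₀ (C.dual m₀) g
      = ∑ a, ∑ b, C.N X₀ (C.dual X₀) a * C.N Y (C.dual Y) b * C.N a b g := by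
    intro g
    rw [← E2 hbr X₀ Y g]
    have hcol : ∑ a, ∑ b, C.N X₀ Y a * C.N (C.dual X₀) (C.dual Y) b * C.N a b g
        = A * B * C.N m₀ (C.dual m₀) g := by
      rw [Finset.sum_eq_single m₀]
      · rw [Finset.sum_eq_single (C.dual m₀)]
        · rw [hfν m₀, if_pos rfl, hfμ (C.dual m₀), if_pos rfl]
        · intro b _ hb
          rw [hfμ b, if_neg hb, mul_zero, zero_mul]
        · intro hb; exact absurd (Finset.mem_univ _) hb
      · intro a _ ha
        apply Finset.sum_eq_zero
        intro b _
        rw [hfν a, if_neg ha, zero_mul, zero_mul]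
      · intro ha; exact absurd (Finset.mem_univ _) ha
    rw [hcol]
  have hSm₀ : C.Sset m₀ = C.Sset X₀ := by
    ext g
    constructor
    · intro hg
      have hgpos : 0 < C.N m₀ (C.dual m₀) g := mem_Sset.mp hg
      have hpos : 0 < ∑ a, ∑ b, C.N X₀ (C.dual X₀) a * C.N Y (C.dual Y) b * C.N a b g := by
        rw [← hcoef g]
        exact Nat.mul_pos (Nat.mul_pos hApos hBpos) hgpos
      obtain ⟨a, ha⟩ := exists_pos_of_sum_pos hpos
      obtain ⟨b, hb⟩ := exists_pos_of_sum_pos ha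
      have ha1 : 0 < C.N X₀ (C.dual X₀) a := by
        exact Nat.pos_of_ne_zero (by intro hc; rw [hc] at hb; simp at hb)
      have hb1 : 0 < C.N Y (C.dual Y) b := by
        exact Nat.pos_of_ne_zero (by intro hc; rw [hc] at hb; simp at hb)
      have hab : 0 < C.N a b g := by
        exact Nat.pos_of_ne_zero (by intro hc; rw [hc] at hb; simp at hb)
      have haT : a ∈ C.Sset X₀ := mem_Sset.mpr ha1
      have hbT : b ∈ C.Sset X₀ := by
        have := mem_Sset.mpr hb1
        rwa [hS] at this
      have hda : C.dim a = 1 := Sset_dim_one gr hpt haT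
      have hgact : g = C.act a b := act_eq_of_pos hda hab
      rw [hgact]
      exact Sset_mul_mem gr hpt haT hbT
    · intro hg
      have h1 : 0 < C.N X₀ (C.dual X₀) C.one := mem_Sset.mp (one_mem_Sset X₀)
      have h2 : 0 < C.N Y (C.dual Y) g := by
        apply mem_Sset.mp
        rw [hS]; exact hg
      have h3 : 0 < C.N C.one g g := by rw [C.N_one_left]; simp
      have hterm : 0 < C.N X₀ (C.dual X₀) C.one * C.N Y (C.dual Y) g * C.N C.one g g :=
        Nat.mul_pos (Nat.mul_pos h1 h2) h3
      have hge : C.N X₀ (C.dual X₀) C.one * C.N Y (C.dual Y) g * C.N C.one g g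
          ≤ ∑ a, ∑ b, C.N X₀ (C.dual X₀) a * C.N Y (C.dual Y) b * C.N a b g := by
        calc C.N X₀ (C.dual X₀) C.one * C.N Y (C.dual Y) g * C.N C.one g g
            ≤ ∑ b, C.N X₀ (C.dual X₀) C.one * C.N Y (C.dual Y) b * C.N C.one b g :=
              Finset.single_le_sum (f := fun b =>
                C.N X₀ (C.dual X₀) C.one * C.N Y (C.dual Y) b * C.N C.one b g)
                (fun i _ => Nat.zero_le _) (Finset.mem_univ g)
          _ ≤ ∑ a, ∑ b, C.N X₀ (C.dual X₀) a * C.N Y (C.dual Y) b * C.N a b g :=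
              Finset.single_le_sum (f := fun a =>
                ∑ b, C.N X₀ (C.dual X₀) a * C.N Y (C.dual Y) b * C.N a b g)
                (fun i _ => Nat.zero_le _) (Finset.mem_univ C.one)
      have hpos2 : 0 < A * B * C.N m₀ (C.dual m₀) g := by
        rw [hcoef g]; omega
      apply mem_Sset.mpr
      by_contra hc
      push_neg at hc
      rw [Nat.le_zero.mp hc, mul_zero] at hpos2
      omega
  exact ⟨m₀, hdim₀, hSm₀, hdeg₀⟩

end Step

end FusionData

namespace FusionData

open Finset

variable {C : FusionData}

/-- If `i` is invertible, the only constituent of `i ⊗ i⋆` is the unit. -/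
lemma inv_S_one {i k : C.I} (hdi : C.dim i = 1) (hk : 0 < C.N i (C.dual i) k) :
    k = C.one := by
  have h1 : C.N i (C.dual i) C.one = 1 := by rw [C.N_dual]; simp
  have hsum : ∑ g, (C.N i (C.dual i) g : ℝ) * C.dim g = 1 := by
    rw [← C.dim_mul, C.dim_dual, hdi, mul_one]
  by_contra hne
  have := terms_zero hsum h1 k hne
  omega

lemma zmod_pow_exists (q : ℕ) [Fact q.Prime]
    {c : Multiplicative (ZMod q)} (hc : c ≠ 1) (d : Multiplicative (ZMod q)) :
    ∃ m : ℕ, c ^ m = d := by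
  haveI : NeZero q := ⟨(Fact.out : q.Prime).ne_zero⟩
  set c' : ZMod q := Multiplicative.toAdd c with hc'
  have hc0 : c' ≠ 0 := by
    intro h0
    apply hc
    have : Multiplicative.toAdd c = 0 := h0
    have := congrArg Multiplicative.ofAdd this
    simpa using this
  set d' : ZMod q := Multiplicative.toAdd d with hd'
  refine ⟨(d' * c'⁻¹).val, ?_⟩
  have h1 : Multiplicative.toAdd (c ^ (d' * c'⁻¹).val) = (d' * c'⁻¹).val • c' := by
    rw [toAdd_pow]
  have h2 : ((d' * c'⁻¹).val : ℕ) • c' = (((d' * c'⁻¹).val : ℕ) : ZMod q) * c' := by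
    rw [nsmul_eq_mul]
  have h3 : (((d' * c'⁻¹).val : ℕ) : ZMod q) = d' * c'⁻¹ := ZMod.natCast_rightInverse _
  have h4 : Multiplicative.toAdd (c ^ (d' * c'⁻¹).val) = d' := by
    rw [h1, h2, h3, mul_assoc, inv_mul_cancel₀ hc0, mul_one]
  exact Multiplicative.toAdd.injective h4

end FusionData


open FusionData in
/-- In a non-pointed braided `ℤ_q`-extension of a pointed fusion
category (`q` prime), every simple has FP dimension `1` or `α` (the least FP
dimension `> 1` of a simple) and `C_ad` is pointed of FP dimension `α²`. -/
theorem braided_extension_dims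
    (q : ℕ) (hq : q.Prime) (C : FusionData) (hbr : C.Braided)
    (ext : C.ZqExtension q) (hnp : ¬ C.Pointed)
    (α : ℝ) (hα : IsLeast {x : ℝ | 1 < x ∧ ∃ i : C.I, C.dim i = x} α) :
    (∀ i : C.I, C.dim i = 1 ∨ C.dim i = α) ∧
    (∀ k ∈ C.adSet, C.dim k = 1) ∧
    C.FPdimSet C.adSet = α ^ 2 := by

  haveI : Fact q.Prime := ⟨hq⟩
  obtain ⟨⟨h1α, X₀, hX₀⟩, hlb⟩ := hα
  have hα' : IsLeast {x : ℝ | 1 < x ∧ ∃ i : C.I, C.dim i = x} α :=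
    ⟨⟨h1α, X₀, hX₀⟩, hlb⟩
  set gr := ext.grading with hgr
  have hpt : ∀ i, gr.deg i = 1 → C.dim i = 1 := ext.trivial_pointed
  -- Part 2: everything in the adjoint set has trivial degree, hence dim 1.
  have hdeg1 : ∀ k, C.gen C.adjointGenerators k → gr.deg k = 1 := by
    intro k hk
    induction hk with
    | base h =>
        obtain ⟨i, hi⟩ := h
        rw [gr.deg_mul i (C.dual i) _ hi, gr.deg_dual, mul_inv_cancel]
    | one => exact gr.deg_one
    | dual _ ih => rw [gr.deg_dual, ih, inv_one]
    | mul _ _ hN ihi ihj => rw [gr.deg_mul _ _ _ hN, ihi, ihj, mul_one]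
  have part2 : ∀ k ∈ C.adSet, C.dim k = 1 := fun k hk => hpt k (hdeg1 k hk)
  -- The main claim: every non-invertible simple has dim α and stabilizer
  -- equal to that of X₀.
  have main : ∀ X : C.I, C.dim X ≠ 1 → C.dim X = α ∧ C.Sset X = C.Sset X₀ := by
    have key : ∀ X : C.I, C.dim X ≠ 1 →
        ∃ Y, gr.deg Y = gr.deg X ∧ C.dim Y = α ∧ C.Sset Y = C.Sset X₀ := by
      by_cases hG : ∃ u, C.dim u = 1 ∧ gr.deg u ≠ 1
      · -- good case: an invertible of nontrivial degree exists
        obtain ⟨u, hu1, hud⟩ := hG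
        intro X hX
        obtain ⟨m, hm⟩ := zmod_pow_exists q hud (gr.deg X * (gr.deg X₀)⁻¹)
        have hup : ∀ m : ℕ, ∃ v, C.dim v = 1 ∧ gr.deg v = (gr.deg u) ^ m := by
          intro m
          induction m with
          | zero => exact ⟨C.one, C.dim_one, by rw [gr.deg_one, pow_zero]⟩
          | succ k ih =>
              obtain ⟨v, hv1, hv2⟩ := ih
              refine ⟨C.act u v, by rw [dim_act hu1, hv1], ?_⟩
              rw [deg_act gr u v, hv2, ← pow_succ']
        obtain ⟨v, hv1, hv2⟩ := hup m
        refine ⟨C.act v X₀, ?_, by rw [dim_act hv1, hX₀],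
          Sset_orbit gr hpt hbr hv1 X₀⟩
        rw [deg_act gr v X₀, hv2, hm, inv_mul_cancel_right]
      · -- bad case: all invertibles live in the trivial component
        push_neg at hG
        have hbad : ∀ u, C.dim u = 1 → gr.deg u = 1 := hG
        have ha : gr.deg X₀ ≠ 1 := by
          intro hc
          exact absurd (hpt X₀ hc) (by rw [hX₀]; exact ne_of_gt h1α)
        have P : ∀ k : ℕ, (gr.deg X₀) ^ (k + 1) = 1 ∨
            ∃ Y, gr.deg Y = (gr.deg X₀) ^ (k + 1) ∧ C.dim Y = α ∧
              C.Sset Y = C.Sset X₀ := by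
          intro k
          induction k with
          | zero => right; exact ⟨X₀, by rw [pow_one], hX₀, rfl⟩
          | succ k ih =>
              by_cases h2 : (gr.deg X₀) ^ (k + 2) = 1
              · left; exact h2
              · right
                rcases ih with h1 | ⟨Y, hYdeg, hYdim, hYS⟩
                · refine ⟨X₀, ?_, hX₀, rfl⟩
                  rw [pow_succ, h1, one_mul]
                · have hdegne : gr.deg X₀ * gr.deg Y ≠ 1 := by
                    rw [hYdeg, ← pow_succ']
                    exact h2
                  obtain ⟨Z, hZdim, hZS, hZdeg⟩ :=
                    step gr hpt hbr hbad hα' hX₀ hYdim hYS hdegne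
                  exact ⟨Z, by rw [hZdeg, hYdeg, ← pow_succ'], hZdim, hZS⟩
        intro X hX
        have hXdeg : gr.deg X ≠ 1 := fun hc => hX (hpt X hc)
        obtain ⟨m, hm⟩ := zmod_pow_exists q ha (gr.deg X)
        have hm0 : m ≠ 0 := by
          intro h0
          rw [h0, pow_zero] at hm
          exact hXdeg hm.symm
        obtain ⟨k, hk⟩ := Nat.exists_eq_succ_of_ne_zero hm0
        rw [hk] at hm
        rcases P k with h1 | ⟨Y, hYdeg, hYdim, hYS⟩
        · rw [hm] at h1
          exact absurd h1 hXdeg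
        · exact ⟨Y, by rw [hYdeg, hm], hYdim, hYS⟩
    intro X hX
    obtain ⟨Y, hYdeg, hYdim, hYS⟩ := key X hX
    obtain ⟨g, hg1, hgact⟩ := same_comp gr hpt hYdeg.symm
    have horb := Sset_orbit gr hpt hbr hg1 X
    rw [hgact] at horb
    have hdim : C.dim X = α := by
      rw [← hYdim, ← hgact, dim_act hg1]
    exact ⟨hdim, by rw [← horb, hYS]⟩
  -- Part 1
  have part1 : ∀ i : C.I, C.dim i = 1 ∨ C.dim i = α := by
    intro i
    by_cases hi : C.dim i = 1
    · exact Or.inl hi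
    · exact Or.inr (main i hi).1
  -- Part 3
  have setEq : C.adSet = ↑(C.Sset X₀) := by
    ext k
    constructor
    · intro hk
      have hk' : C.gen C.adjointGenerators k := hk
      clear hk
      induction hk' with
      | base h =>
          obtain ⟨i, hi⟩ := h
          by_cases hdi : C.dim i = 1
          · have hko := inv_S_one hdi hi
            rw [hko]
            exact Finset.mem_coe.mpr (one_mem_Sset X₀)
          · have := (main i hdi).2
            rw [← this]
            exact Finset.mem_coe.mpr (mem_Sset.mpr hi)
      | one => exact Finset.mem_coe.mpr (one_mem_Sset X₀)
      | dual _ ih =>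
          exact Finset.mem_coe.mpr (Sset_dual_mem gr hpt (Finset.mem_coe.mp ih))
      | mul _ _ hN ihi ihj =>
          have hii := Finset.mem_coe.mp ihi
          have hjj := Finset.mem_coe.mp ihj
          have hdi := Sset_dim_one gr hpt hii
          have hko := act_eq_of_pos hdi hN
          rw [hko]
          exact Finset.mem_coe.mpr (Sset_mul_mem gr hpt hii hjj)
    · intro hk
      exact gen.base ⟨X₀, mem_Sset.mp (Finset.mem_coe.mp hk)⟩
  have hcard : α ^ 2 = ((C.Sset X₀).card : ℝ) := by
    rw [← hX₀]
    exact Sset_card gr hpt X₀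
  have part3 : C.FPdimSet C.adSet = α ^ 2 := by
    rw [setEq]
    have hstep : C.FPdimSet ↑(C.Sset X₀)
        = ∑ i, if i ∈ C.Sset X₀ then (1 : ℝ) else 0 := by
      unfold FPdimSet
      apply Finset.sum_congr rfl
      intro i _
      split_ifs with h1 h2 h2
      · rw [Sset_dim_one gr hpt h2, one_pow]
      · exact absurd (Finset.mem_coe.mp h1) h2
      · exact absurd (Finset.mem_coe.mpr h2) h1
      · rfl
    rw [hstep, Finset.sum_ite_mem, Finset.univ_inter, Finset.sum_const,
      nsmul_eq_mul, mul_one, ← hcard]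
  exact ⟨part1, part2, part3⟩
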